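/- Suppose (H1) and (H2) hold with β > 0. Let φ̄ ∈ Γ be an upper solution and φ̲ a lower solution of −u'(t) + f(u_t) = 0 satisfying (C1) 0 ≤ φ̲(t) ≤ φ̄(t) ≤ K for all t ∈ ℝ, and (C3) t ↦ e^{βt}(φ̄(t) − φ̲(t)) is non-decreasing on ℝ. Define x₁(t) = ∫_{−∞}^{t} e^{−β(t−s)} H(φ̄)(s) ds. Then φ̲(t) ≤ x₁(t) ≤ φ̄(t) for all t ∈ ℝ. -/

import Mathlib

open Real Filter MeasureTheory
open Topology

/-- The segment `u_t ∈ C([−τ,0],ℝ)` of a function `u : ℝ → ℝ`, `u_t(s) = u(t+s)`. -/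
def seg (τ : ℝ) (u : ℝ → ℝ) (t : ℝ) : Set.Icc (-τ) (0 : ℝ) → ℝ :=
  fun s => u (t + s.1)

/-- Under (H1) and (H2) with `β > 0`, if `φ̄ ∈ Γ` is an upper solution of
`−u'(t) + f(u_t) = 0`, `φ̲` is a lower solution satisfying (C1) and (C3), and
`x₁(t) = ∫_{−∞}^t e^{−β(t−s)} H(φ̄)(s) ds`, then `φ̲ ≤ x₁ ≤ φ̄` on `ℝ`. -/
lemma seg_continuous {τ : ℝ} {u : ℝ → ℝ} (hu : Continuous u) (t : ℝ) :
    Continuous (seg τ u t) :=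
  hu.comp (continuous_const.add continuous_subtype_val)

lemma cont_fseg {τ : ℝ} {f : (Set.Icc (-τ) (0:ℝ) → ℝ) → ℝ}
    (hf : Continuous fun φ : C(Set.Icc (-τ) (0:ℝ), ℝ) => f ⇑φ)
    {u : ℝ → ℝ} (hu : Continuous u) : Continuous fun t => f (seg τ u t) := by
  have h1 : Continuous fun t : ℝ =>
      (⟨seg τ u t, seg_continuous hu t⟩ : C(Set.Icc (-τ) (0:ℝ), ℝ)) := by
    apply ContinuousMap.continuous_of_continuous_uncurry
    exact hu.comp (continuous_fst.add (continuous_subtype_val.comp continuous_snd))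
  exact hf.comp h1

/-- Lebesgue: for a continuous monotone function with an a.e. derivative `d`,
`∫_{(a,b]} d ≤ ψ b - ψ a`. -/
lemma mono_integral_ae_deriv_le {ψ d : ℝ → ℝ} (hm : Monotone ψ) (hc : Continuous ψ)
    (hd : ∀ᵐ s ∂(volume : Measure ℝ), HasDerivAt ψ (d s) s) {a b : ℝ} (hab : a ≤ b) :
    ∫ s in Set.Ioc a b, d s ≤ ψ b - ψ a := by
  set F := hm.stieltjesFunction with hF
  have hFeq : (F : ℝ → ℝ) = ψ := by
    funext x
    exact rightLim_eq_of_tendsto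
      (hc.continuousAt.continuousWithinAt)
  have hd2 : ∀ᵐ x ∂(volume : Measure ℝ),
      HasDerivAt ψ ((F.measure.rnDeriv volume x).toReal) x := by
    have h := F.ae_hasDerivAt
    rwa [hFeq] at h
  have heq : (fun s => d s) =ᵐ[volume] fun s => (F.measure.rnDeriv volume s).toReal := by
    filter_upwards [hd, hd2] with s h1 h2 using h1.unique h2
  calc ∫ s in Set.Ioc a b, d s
      = ∫ s in Set.Ioc a b, (F.measure.rnDeriv volume s).toReal :=
        integral_congr_ae (ae_restrict_of_ae heq)
    _ ≤ (F.measure (Set.Ioc a b)).toReal :=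
        Measure.setIntegral_toReal_rnDeriv_le (by
          rw [F.measure_Ioc]; exact ENNReal.ofReal_ne_top)
    _ = ψ b - ψ a := by
        rw [F.measure_Ioc, ENNReal.toReal_ofReal]
        · rw [hFeq]
        · rw [hFeq]; exact sub_nonneg.mpr (hm hab)

/-- Key increment bound coming from the profile-set condition. -/
lemma key_incr {β K : ℝ} (hβ : 0 < β) {φ : ℝ → ℝ} (hmono : Monotone φ)
    (h0 : ∀ t, 0 ≤ φ t) (hK : ∀ t, φ t ≤ K)
    (hΓ : ∀ s : ℝ, 0 < s → Monotone fun t : ℝ => Real.exp (β * t) * (φ (t + s) - φ t)) :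
    ∀ t u : ℝ, t ≤ u → φ u - φ t ≤ K * (1 - Real.exp (-(β * (u - t)))) := by
  intro t u htu
  rcases eq_or_lt_of_le htu with rfl | hlt
  · simp
  set σ := u - t with hσ
  have hσpos : 0 < σ := by simp only [hσ]; linarith
  set r := Real.exp (-(β * σ)) with hr
  have hr0 : 0 < r := Real.exp_pos _
  have hr1 : r < 1 := by
    rw [hr, Real.exp_lt_one_iff]
    nlinarith
  set c := φ u - φ t with hc
  have hc0 : 0 ≤ c := sub_nonneg.mpr (hmono htu)
  have htu' : t + σ = u := by rw [hσ]; ring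
  have hstep : ∀ k : ℕ, r ^ k * c ≤ φ (t + (k + 1) * σ) - φ (t + k * σ) := by
    intro k
    have hmon := hΓ σ hσpos
    have hkσ : (0:ℝ) ≤ (k : ℝ) * σ := mul_nonneg (Nat.cast_nonneg k) hσpos.le
    have h1 : t ≤ t + (k:ℝ) * σ := by linarith
    have hA := hmon h1
    simp only [] at hA
    rw [htu'] at hA
    have harg : t + (k:ℝ) * σ + σ = t + ((k:ℝ) + 1) * σ := by ring
    rw [harg] at hA
    have hid : r ^ k * Real.exp (β * (t + (k:ℝ)*σ)) = Real.exp (β * t) := by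
      rw [hr, ← Real.exp_nat_mul, ← Real.exp_add]
      ring_nf
    have hE2 : (0:ℝ) < Real.exp (β*(t+(k:ℝ)*σ)) := Real.exp_pos _
    have h3 : Real.exp (β*t) * (φ u - φ t)
        = Real.exp (β*(t+(k:ℝ)*σ)) * (r^k * (φ u - φ t)) := by rw [← hid]; ring
    rw [h3] at hA
    exact le_of_mul_le_mul_left hA hE2
  have hsum : ∀ n : ℕ, c * ∑ k ∈ Finset.range n, r ^ k ≤ K := by
    intro n
    have htel := Finset.sum_range_sub (fun k : ℕ => φ (t + (k:ℝ) * σ)) n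
    have hle : c * ∑ k ∈ Finset.range n, r ^ k
        ≤ ∑ k ∈ Finset.range n, (φ (t + ((k:ℝ)+1) * σ) - φ (t + (k:ℝ) * σ)) := by
      rw [Finset.mul_sum]
      refine Finset.sum_le_sum fun k _ => ?_
      rw [mul_comm]
      exact hstep k
    push_cast at htel
    rw [htel] at hle
    have := hK (t + (n:ℝ)*σ)
    have := h0 (t + (0:ℝ)*σ)
    linarith
  have hgeom : Tendsto (fun n : ℕ => ∑ k ∈ Finset.range n, r ^ k) atTop (𝓝 (1 - r)⁻¹) :=
    (hasSum_geometric_of_lt_one hr0.le hr1).tendsto_sum_nat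
  have hfin : c * (1 - r)⁻¹ ≤ K :=
    le_of_tendsto (hgeom.const_mul c) (Filter.Eventually.of_forall hsum)
  have h1r : 0 < 1 - r := by linarith
  calc c = c * (1 - r)⁻¹ * (1 - r) := by field_simp
    _ ≤ K * (1 - r) := mul_le_mul_of_nonneg_right hfin h1r.le

theorem x1_between_lower_and_upper
    (τ : ℝ) (hτ : 0 < τ)
    (f : (Set.Icc (-τ) (0 : ℝ) → ℝ) → ℝ)
    (hf : Continuous fun φ : C(Set.Icc (-τ) (0 : ℝ), ℝ) => f ⇑φ)
    (K : ℝ) (hK : 0 < K)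
    -- (H1)
    (hH1₀ : f (fun _ => (0 : ℝ)) = 0) (hH1K : f (fun _ => K) = 0)
    (hH1ne : ∀ u : ℝ, 0 < u → u < K → f (fun _ => u) ≠ 0)
    (β : ℝ) (hβ : 0 < β)
    -- (H2)
    (hH2 : ∀ φ ψ : Set.Icc (-τ) (0 : ℝ) → ℝ, Continuous φ → Continuous ψ →
      (∀ s, 0 ≤ ψ s ∧ ψ s ≤ φ s ∧ φ s ≤ K) →
      Monotone (fun s : Set.Icc (-τ) (0 : ℝ) => Real.exp (β * s.1) * (φ s - ψ s)) →
      0 ≤ f φ - f ψ +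
        β * (φ ⟨0, Set.right_mem_Icc.mpr (neg_nonpos.mpr hτ.le)⟩ -
             ψ ⟨0, Set.right_mem_Icc.mpr (neg_nonpos.mpr hτ.le)⟩))
    -- φ̄ ∈ Γ
    (φb : ℝ → ℝ) (hφbc : Continuous φb) (hφbm : Monotone φb)
    (hφb₀ : Tendsto φb atBot (nhds 0)) (hφbK : Tendsto φb atTop (nhds K))
    (hφbΓ : ∀ s : ℝ, 0 < s →
      Monotone fun t : ℝ => Real.exp (β * t) * (φb (t + s) - φb t))
    -- φ̄ is an upper solution
    (hup : ∃ D : ℝ → ℝ, (∀ᵐ t ∂(volume : Measure ℝ), HasDerivAt φb (D t) t) ∧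
      (∃ M : ℝ, ∀ᵐ t ∂(volume : Measure ℝ), |D t| ≤ M) ∧
      (∀ᵐ t ∂(volume : Measure ℝ), f (seg τ φb t) ≤ D t))
    -- φ̲ is a lower solution satisfying (C1) and (C3)
    (φl : ℝ → ℝ) (hφlc : Continuous φl)
    (hlow : ∃ D : ℝ → ℝ, (∀ᵐ t ∂(volume : Measure ℝ), HasDerivAt φl (D t) t) ∧
      (∃ M : ℝ, ∀ᵐ t ∂(volume : Measure ℝ), |D t| ≤ M) ∧
      (∀ᵐ t ∂(volume : Measure ℝ), D t ≤ f (seg τ φl t)))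
    (hC1 : ∀ t : ℝ, 0 ≤ φl t ∧ φl t ≤ φb t ∧ φb t ≤ K)
    (hC3 : Monotone fun t : ℝ => Real.exp (β * t) * (φb t - φl t))
    -- x₁
    (x₁ : ℝ → ℝ)
    (hx₁ : ∀ t : ℝ, x₁ t =
      ∫ s in Set.Iic t, Real.exp (-β * (t - s)) * (f (seg τ φb s) + β * φb s)) :
    ∀ t : ℝ, φl t ≤ x₁ t ∧ x₁ t ≤ φb t := by
  obtain ⟨Db, hDb, ⟨Mb, hMb⟩, hUb⟩ := hup
  obtain ⟨Dl, hDl, ⟨Ml, hMl⟩, hLl⟩ := hlow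
  have hfbc : Continuous fun s : ℝ => f (seg τ φb s) := cont_fseg hf hφbc
  have hflc : Continuous fun s : ℝ => f (seg τ φl s) := cont_fseg hf hφlc
  have hEc : Continuous fun s : ℝ => Real.exp (β * s) :=
    Real.continuous_exp.comp (continuous_const.mul continuous_id)
  -- (H2) comparison
  have hcmp : ∀ s : ℝ, f (seg τ φl s) + β * φl s ≤ f (seg τ φb s) + β * φb s := by
    intro s
    have hbd : ∀ v : Set.Icc (-τ) (0:ℝ),
        0 ≤ seg τ φl s v ∧ seg τ φl s v ≤ seg τ φb s v ∧ seg τ φb s v ≤ K :=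
      fun v => hC1 (s + v.1)
    have hmono : Monotone (fun v : Set.Icc (-τ) (0:ℝ) =>
        Real.exp (β * v.1) * (seg τ φb s v - seg τ φl s v)) := by
      intro v w hvw
      have h1 : s + v.1 ≤ s + w.1 := add_le_add_right (Subtype.coe_le_coe.mpr hvw) s
      have h2 := hC3 h1
      simp only [seg]
      have e1 : Real.exp (β * v.1)
          = Real.exp (-(β*s)) * Real.exp (β*(s+v.1)) := by rw [← Real.exp_add]; ring_nf
      have e2 : Real.exp (β * w.1)
          = Real.exp (-(β*s)) * Real.exp (β*(s+w.1)) := by rw [← Real.exp_add]; ring_nf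
      rw [e1, e2, mul_assoc, mul_assoc]
      exact mul_le_mul_of_nonneg_left h2 (Real.exp_pos _).le
    have h := hH2 (seg τ φb s) (seg τ φl s) (seg_continuous hφbc s)
      (seg_continuous hφlc s) hbd hmono
    simp only [seg, add_zero] at h
    linarith
  -- basic facts
  have hφb0 : ∀ s, 0 ≤ φb s := fun s => (hC1 s).1.trans (hC1 s).2.1
  have hMb0 : 0 ≤ Mb := by
    obtain ⟨s₀, h₀⟩ := hMb.exists; exact (abs_nonneg _).trans h₀
  have hMl0 : 0 ≤ Ml := by
    obtain ⟨s₀, h₀⟩ := hMl.exists; exact (abs_nonneg _).trans h₀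
  have hDbae : AEMeasurable Db := by
    have h : deriv φb =ᵐ[volume] Db := by
      filter_upwards [hDb] with s hs using hs.deriv
    exact (measurable_deriv φb).aemeasurable.congr h
  have hDlae : AEMeasurable Dl := by
    have h : deriv φl =ᵐ[volume] Dl := by
      filter_upwards [hDl] with s hs using hs.deriv
    exact (measurable_deriv φl).aemeasurable.congr h
  -- a.e. derivatives of the relevant monotone combinations
  have hEd : ∀ s : ℝ, HasDerivAt (fun x => Real.exp (β * x)) (Real.exp (β * s) * β) s := by
    intro s
    have h := ((hasDerivAt_id s).const_mul β).exp
    simpa using h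
  have hg₁d : ∀ᵐ s ∂(volume : Measure ℝ), HasDerivAt (fun x => Real.exp (β*x) * φb x)
      (Real.exp (β*s) * (Db s + β * φb s)) s := by
    filter_upwards [hDb] with s hs
    have h := (hEd s).mul hs
    exact h.congr_deriv (by ring)
  have hψd : ∀ᵐ s ∂(volume : Measure ℝ),
      HasDerivAt (fun x => Real.exp (β*x) * (φb x - φl x))
      (Real.exp (β*s) * (Db s + β * φb s) - Real.exp (β*s) * (Dl s + β * φl s)) s := by
    filter_upwards [hDb, hDl] with s hs hs'
    have h := (hEd s).mul (hs.sub hs')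
    exact h.congr_deriv (by simp only [Pi.sub_apply]; ring)
  have hg₁m : Monotone fun s : ℝ => Real.exp (β*s) * φb s := by
    intro s v hsv
    exact mul_le_mul (Real.exp_le_exp.mpr (mul_le_mul_of_nonneg_left hsv hβ.le))
      (hφbm hsv) (hφb0 s) (Real.exp_pos _).le
  -- the 2K trick function
  have hu2m : Monotone fun s : ℝ => 2*K*Real.exp (β*s) - Real.exp (β*s) * φb s := by
    intro s v hsv
    have hkey := key_incr hβ hφbm hφb0 (fun s => (hC1 s).2.2) hφbΓ s v hsv
    have hEs : Real.exp (β*v) * Real.exp (-(β*(v-s))) = Real.exp (β*s) := by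
      rw [← Real.exp_add]; ring_nf
    have hEle : Real.exp (β*s) ≤ Real.exp (β*v) :=
      Real.exp_le_exp.mpr (mul_le_mul_of_nonneg_left hsv hβ.le)
    have h1 := mul_le_mul_of_nonneg_left hkey (Real.exp_pos (β*v)).le
    have h2 := mul_le_mul_of_nonneg_right ((hC1 s).2.2) (sub_nonneg.mpr hEle)
    simp only []
    nlinarith [h1, hEs, h2, hφb0 s]
  have hu2d : ∀ᵐ s ∂(volume : Measure ℝ),
      HasDerivAt (fun x => 2*K*Real.exp (β*x) - Real.exp (β*x) * φb x)
      (2*K*(Real.exp (β*s) * β) - Real.exp (β*s) * (Db s + β * φb s)) s := by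
    filter_upwards [hg₁d] with s hs
    exact (((hEd s).const_mul (2*K)).sub hs)
  intro t
  -- estimates on finite intervals
  have hfin : ∀ a : ℝ, a ≤ t →
      Real.exp (β*t) * φl t - Real.exp (β*a) * φl a
        ≤ (∫ s in Set.Ioc a t, Real.exp (β*s) * (f (seg τ φb s) + β * φb s)) ∧
      (∫ s in Set.Ioc a t, Real.exp (β*s) * (f (seg τ φb s) + β * φb s))
        ≤ Real.exp (β*t) * φb t - Real.exp (β*a) * φb a := by
    intro a hab
    have hIdb : IntegrableOn (fun s => Real.exp (β*s) * (Db s + β * φb s)) (Set.Ioc a t) := by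
      refine Integrable.mono' (g := fun _ => Real.exp (β*t) * (Mb + β*K))
        (integrableOn_const measure_Ioc_lt_top.ne) ?_ ?_
      · exact ((hEc.aemeasurable.mul
          (hDbae.add (aemeasurable_const.mul hφbc.aemeasurable))).aestronglyMeasurable).restrict
      · filter_upwards [ae_restrict_of_ae hMb, ae_restrict_mem measurableSet_Ioc] with s h1 h2
        rw [Real.norm_eq_abs, abs_mul, abs_of_pos (Real.exp_pos _)]
        have hb1 : |Db s + β * φb s| ≤ Mb + β*K := by
          have := hC1 s
          have := abs_le.mp h1
          rw [abs_le]
          constructor <;> nlinarith [hφb0 s]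
        have hb2 : Real.exp (β*s) ≤ Real.exp (β*t) :=
          Real.exp_le_exp.mpr (mul_le_mul_of_nonneg_left h2.2 hβ.le)
        calc Real.exp (β*s) * |Db s + β * φb s| ≤ Real.exp (β*s) * (Mb + β*K) :=
              mul_le_mul_of_nonneg_left hb1 (Real.exp_pos _).le
          _ ≤ Real.exp (β*t) * (Mb + β*K) :=
              mul_le_mul_of_nonneg_right hb2 (by nlinarith [hMb0, hK.le, hβ.le])
    have hIdl : IntegrableOn (fun s => Real.exp (β*s) * (Dl s + β * φl s)) (Set.Ioc a t) := by
      refine Integrable.mono' (g := fun _ => Real.exp (β*t) * (Ml + β*K))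
        (integrableOn_const measure_Ioc_lt_top.ne) ?_ ?_
      · exact ((hEc.aemeasurable.mul
          (hDlae.add (aemeasurable_const.mul hφlc.aemeasurable))).aestronglyMeasurable).restrict
      · filter_upwards [ae_restrict_of_ae hMl, ae_restrict_mem measurableSet_Ioc] with s h1 h2
        rw [Real.norm_eq_abs, abs_mul, abs_of_pos (Real.exp_pos _)]
        have hb1 : |Dl s + β * φl s| ≤ Ml + β*K := by
          have h3 := hC1 s
          have := abs_le.mp h1
          rw [abs_le]
          constructor <;> nlinarith [h3.1, h3.2.1, h3.2.2]
        have hb2 : Real.exp (β*s) ≤ Real.exp (β*t) :=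
          Real.exp_le_exp.mpr (mul_le_mul_of_nonneg_left h2.2 hβ.le)
        calc Real.exp (β*s) * |Dl s + β * φl s| ≤ Real.exp (β*s) * (Ml + β*K) :=
              mul_le_mul_of_nonneg_left hb1 (Real.exp_pos _).le
          _ ≤ Real.exp (β*t) * (Ml + β*K) :=
              mul_le_mul_of_nonneg_right hb2 (by nlinarith [hMl0, hK.le, hβ.le])
    have hIfb : IntegrableOn (fun s => Real.exp (β*s) * (f (seg τ φb s) + β * φb s))
        (Set.Ioc a t) :=
      (hEc.mul (hfbc.add (continuous_const.mul hφbc))).integrableOn_Ioc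
    have hIfl : IntegrableOn (fun s => Real.exp (β*s) * (f (seg τ φl s) + β * φl s))
        (Set.Ioc a t) :=
      (hEc.mul (hflc.add (continuous_const.mul hφlc))).integrableOn_Ioc
    have hIE : IntegrableOn (fun s => 2*K*(Real.exp (β*s) * β)) (Set.Ioc a t) :=
      (continuous_const.mul (hEc.mul continuous_const)).integrableOn_Ioc
    -- upper estimate
    have hup1 : (∫ s in Set.Ioc a t, Real.exp (β*s) * (f (seg τ φb s) + β * φb s))
        ≤ ∫ s in Set.Ioc a t, Real.exp (β*s) * (Db s + β * φb s) := by
      refine integral_mono_ae hIfb hIdb ?_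
      filter_upwards [ae_restrict_of_ae hUb] with s hs
      have : f (seg τ φb s) + β * φb s ≤ Db s + β * φb s := by linarith
      exact mul_le_mul_of_nonneg_left this (Real.exp_pos _).le
    have hup2 : (∫ s in Set.Ioc a t, Real.exp (β*s) * (Db s + β * φb s))
        ≤ Real.exp (β*t) * φb t - Real.exp (β*a) * φb a :=
      mono_integral_ae_deriv_le hg₁m (hEc.mul hφbc) hg₁d hab
    -- lower estimate
    have hlo1 : (∫ s in Set.Ioc a t, Real.exp (β*s) * (Dl s + β * φl s))
        ≤ ∫ s in Set.Ioc a t, Real.exp (β*s) * (f (seg τ φb s) + β * φb s) := by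
      refine integral_mono_ae hIdl hIfb ?_
      filter_upwards [ae_restrict_of_ae hLl] with s hs
      have h1 : Dl s + β * φl s ≤ f (seg τ φl s) + β * φl s := by linarith
      have h2 := hcmp s
      have : Dl s + β * φl s ≤ f (seg τ φb s) + β * φb s := by linarith
      exact mul_le_mul_of_nonneg_left this (Real.exp_pos _).le
    have hψle : (∫ s in Set.Ioc a t, (Real.exp (β*s) * (Db s + β * φb s)
          - Real.exp (β*s) * (Dl s + β * φl s)))
        ≤ (Real.exp (β*t) * (φb t - φl t)) - (Real.exp (β*a) * (φb a - φl a)) :=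
      mono_integral_ae_deriv_le hC3 (hEc.mul (hφbc.sub hφlc)) hψd hab
    have hu2le : (∫ s in Set.Ioc a t, (2*K*(Real.exp (β*s) * β)
          - Real.exp (β*s) * (Db s + β * φb s)))
        ≤ (2*K*Real.exp (β*t) - Real.exp (β*t) * φb t)
          - (2*K*Real.exp (β*a) - Real.exp (β*a) * φb a) :=
      mono_integral_ae_deriv_le hu2m
        ((continuous_const.mul hEc).sub (hEc.mul hφbc)) hu2d hab
    have hEeq : (∫ s in Set.Ioc a t, 2*K*(Real.exp (β*s) * β))
        = 2*K*Real.exp (β*t) - 2*K*Real.exp (β*a) := by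
      rw [← intervalIntegral.integral_of_le hab]
      have hder : ∀ x ∈ Set.uIcc a t,
          HasDerivAt (fun s => 2*K*Real.exp (β*s)) (2*K*(Real.exp (β*x) * β)) x :=
        fun x _ => (hEd x).const_mul (2*K)
      exact intervalIntegral.integral_eq_sub_of_hasDerivAt hder
        ((continuous_const.mul (hEc.mul continuous_const)).intervalIntegrable a t)
    have hsub1 : (∫ s in Set.Ioc a t, (2*K*(Real.exp (β*s) * β)
          - Real.exp (β*s) * (Db s + β * φb s)))
        = (∫ s in Set.Ioc a t, 2*K*(Real.exp (β*s) * β))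
          - ∫ s in Set.Ioc a t, Real.exp (β*s) * (Db s + β * φb s) :=
      integral_sub hIE hIdb
    have hsub2 : (∫ s in Set.Ioc a t, (Real.exp (β*s) * (Db s + β * φb s)
          - Real.exp (β*s) * (Dl s + β * φl s)))
        = (∫ s in Set.Ioc a t, Real.exp (β*s) * (Db s + β * φb s))
          - ∫ s in Set.Ioc a t, Real.exp (β*s) * (Dl s + β * φl s) :=
      integral_sub hIdb hIdl
    constructor
    · rw [hsub1, hEeq] at hu2le
      rw [hsub2] at hψle
      linarith
    · linarith
  -- integrability on `Iic t`
  have hEder : ∀ x : ℝ, HasDerivAt (fun s => β⁻¹ * Real.exp (β*s)) (Real.exp (β*x)) x := by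
    intro x
    have h := (hEd x).const_mul β⁻¹
    exact h.congr_deriv (by rw [mul_comm (Real.exp (β*x)) β, ← mul_assoc, inv_mul_cancel₀ hβ.ne', one_mul])
  have hcalc : ∀ a : ℝ, (∫ x in a..t, Real.exp (β*x))
      = β⁻¹ * Real.exp (β*t) - β⁻¹ * Real.exp (β*a) := fun a =>
    intervalIntegral.integral_eq_sub_of_hasDerivAt (fun x _ => hEder x)
      (hEc.intervalIntegrable a t)
  have hEIic : IntegrableOn (fun s : ℝ => Real.exp (β*s)) (Set.Iic t) := by
    refine integrableOn_Iic_of_intervalIntegral_norm_bounded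
      (l := (atTop : Filter ℕ)) (β⁻¹ * Real.exp (β*t)) t (a := fun n : ℕ => t - n)
      (fun i => hEc.integrableOn_Ioc) ?_ ?_
    · have h1 : Tendsto (fun n : ℕ => -(n:ℝ)) atTop atBot :=
        tendsto_neg_atBot_iff.mpr tendsto_natCast_atTop_atTop
      have h2 := tendsto_atBot_add_const_left atTop t h1
      simpa [sub_eq_add_neg] using h2
    · refine Filter.Eventually.of_forall fun i => ?_
      have : (∫ x in (t - (i:ℝ))..t, ‖Real.exp (β*x)‖) = ∫ x in (t - (i:ℝ))..t, Real.exp (β*x) := by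
        congr 1
        funext x
        rw [Real.norm_eq_abs, abs_of_pos (Real.exp_pos _)]
      rw [this, hcalc]
      have := Real.exp_pos (β*(t - (i:ℝ)))
      have hβi : 0 < β⁻¹ := inv_pos.mpr hβ
      nlinarith
  have hIntIic : IntegrableOn (fun s => Real.exp (β*s) * (f (seg τ φb s) + β * φb s))
      (Set.Iic t) := by
    refine Integrable.mono' (g := fun s => (Mb + Ml + β*K + β*K) * Real.exp (β*s))
      (hEIic.const_mul _) ?_ ?_
    · exact ((hEc.mul (hfbc.add (continuous_const.mul hφbc))).aestronglyMeasurable).restrict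
    · refine ae_restrict_of_ae ?_
      filter_upwards [hUb, hMb, hLl, hMl] with s h1 h2 h3 h4
      have hc1 := hC1 s
      have hup' : f (seg τ φb s) ≤ Mb := h1.trans ((le_abs_self _).trans h2)
      have hlo' : -(Ml + β*K) ≤ f (seg τ φb s) := by
        have h5 := hcmp s
        have h6 : -Ml ≤ Dl s := by
          have := abs_le.mp h4; linarith
        nlinarith [h3, h6, hc1.1, hc1.2.1, hc1.2.2, hβ.le]
      rw [Real.norm_eq_abs, abs_mul, abs_of_pos (Real.exp_pos _)]
      have hb : |f (seg τ φb s) + β * φb s| ≤ Mb + Ml + β*K + β*K := by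
        rw [abs_le]
        constructor <;> nlinarith [hc1.1, hc1.2.1, hc1.2.2, hβ.le, hφb0 s]
      calc Real.exp (β*s) * |f (seg τ φb s) + β * φb s|
          ≤ Real.exp (β*s) * (Mb + Ml + β*K + β*K) :=
            mul_le_mul_of_nonneg_left hb (Real.exp_pos _).le
        _ = (Mb + Ml + β*K + β*K) * Real.exp (β*s) := by ring
  have htend : Tendsto (fun a : ℝ => ∫ x in a..t, Real.exp (β*x) * (f (seg τ φb x) + β * φb x))
      atBot (𝓝 (∫ s in Set.Iic t, Real.exp (β*s) * (f (seg τ φb s) + β * φb s))) :=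
    intervalIntegral_tendsto_integral_Iic t hIntIic tendsto_id
  have hE0 : Tendsto (fun a : ℝ => Real.exp (β*a)) atBot (𝓝 0) := by
    apply Real.tendsto_exp_atBot.comp
    exact Tendsto.const_mul_atBot hβ tendsto_id
  -- upper bound for J
  have hJub : (∫ s in Set.Iic t, Real.exp (β*s) * (f (seg τ φb s) + β * φb s))
      ≤ Real.exp (β*t) * φb t := by
    refine le_of_tendsto htend ?_
    filter_upwards [eventually_le_atBot t] with a ha
    rw [intervalIntegral.integral_of_le ha]
    have h1 := (hfin a ha).2
    have h2 : 0 ≤ Real.exp (β*a) * φb a := mul_nonneg (Real.exp_pos _).le (hφb0 a)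
    linarith
  have hJlb : Real.exp (β*t) * φl t
      ≤ ∫ s in Set.Iic t, Real.exp (β*s) * (f (seg τ φb s) + β * φb s) := by
    have h2 : Tendsto (fun a : ℝ => Real.exp (β*t) * φl t - K * Real.exp (β*a)) atBot
        (𝓝 (Real.exp (β*t) * φl t)) := by
      have h3 : Tendsto (fun a : ℝ => K * Real.exp (β*a)) atBot (𝓝 (K*0)) :=
        hE0.const_mul K
      have h4 : Tendsto (fun _ : ℝ => Real.exp (β*t) * φl t) atBot
          (𝓝 (Real.exp (β*t) * φl t)) := tendsto_const_nhds
      simpa using h4.sub h3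
    refine le_of_tendsto_of_tendsto h2 htend ?_
    filter_upwards [eventually_le_atBot t] with a ha
    rw [intervalIntegral.integral_of_le ha]
    have h1 := (hfin a ha).1
    have h3 : φl a ≤ K := (hC1 a).2.1.trans (hC1 a).2.2
    have h4 : Real.exp (β*a) * φl a ≤ Real.exp (β*a) * K :=
      mul_le_mul_of_nonneg_left h3 (Real.exp_pos _).le
    have : Real.exp (β*t) * φl t - K * Real.exp (β*a)
        ≤ Real.exp (β*t) * φl t - Real.exp (β*a) * φl a := by linarith
    linarith
  -- rewrite x₁
  have hxe : x₁ t = Real.exp (-(β*t))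
      * ∫ s in Set.Iic t, Real.exp (β*s) * (f (seg τ φb s) + β * φb s) := by
    rw [hx₁ t, ← integral_const_mul]
    refine integral_congr_ae (Filter.Eventually.of_forall fun s => ?_)
    show Real.exp (-β * (t - s)) * (f (seg τ φb s) + β * φb s)
        = Real.exp (-(β*t)) * (Real.exp (β*s) * (f (seg τ φb s) + β * φb s))
    rw [← mul_assoc, ← Real.exp_add]
    ring_nf
  have hee : Real.exp (-(β*t)) * Real.exp (β*t) = 1 := by
    rw [← Real.exp_add]; simp
  have hepos : (0:ℝ) < Real.exp (-(β*t)) := Real.exp_pos _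
  constructor
  · have h1 := mul_le_mul_of_nonneg_left hJlb hepos.le
    rw [← mul_assoc, hee, one_mul] at h1
    rw [hxe]
    exact h1
  · have h1 := mul_le_mul_of_nonneg_left hJub hepos.le
    rw [← mul_assoc, hee, one_mul] at h1
    rw [hxe]
    exact h1
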